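/- Let 0 < α < 1/2, ρ ∈ [0,1], φ = αρπ, θ₁ = -φ/(1-α), and F(z) = z + e^{iφ} z^{1-α} (principal branch). Then for all r ≥ 0, Im F(r e^{iθ₁}) ≤ 0 and Im F(r e^{iθ₂}) ≤ 0, where θ₂ = (π-φ)/(1-α). -/

import Mathlib

open Complex Real Set

/-- `Fray α φ θ r` is `F(r e^{iθ}) = r e^{iθ} + e^{iφ} r^{1-α} e^{i(1-α)θ}`, i.e. the value of
`F(z) = z + e^{iφ} z^{1-α}` on the half-line `l_θ`, with the branch
`(r e^{iθ})^{1-α} = r^{1-α} e^{i(1-α)θ}`. -/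
noncomputable def Fray (α φ θ r : ℝ) : ℂ :=
  (r : ℂ) * Complex.exp (θ * Complex.I) +
    Complex.exp (φ * Complex.I) * ((r ^ (1 - α) : ℝ) : ℂ) *
      Complex.exp (((1 - α) * θ) * Complex.I)

lemma fray_im (α φ θ r : ℝ) :
    (Fray α φ θ r).im = r * Real.sin θ + r ^ (1 - α) * Real.sin (φ + (1 - α) * θ) := by
  have h : Complex.exp (φ * Complex.I) * ((r ^ (1 - α) : ℝ) : ℂ) *
      Complex.exp (((1 - α) * θ) * Complex.I)
      = ((r ^ (1 - α) : ℝ) : ℂ) * Complex.exp ((↑(φ + (1 - α) * θ) : ℂ) * Complex.I) := by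
    push_cast
    rw [add_mul, Complex.exp_add]
    ring
  rw [Fray, h]
  simp only [Complex.add_im, Complex.mul_im, Complex.ofReal_re, Complex.ofReal_im,
    Complex.exp_ofReal_mul_I_im, Complex.exp_ofReal_mul_I_re, zero_mul, add_zero, mul_zero]

theorem boolean_stable_rays_in_lower_halfplane
    (α ρ φ θ₁ θ₂ : ℝ) (hα : 0 < α) (hα' : α < 1 / 2) (hρ : ρ ∈ Set.Icc (0 : ℝ) 1)
    (hφ : φ = α * ρ * π) (hθ₁ : θ₁ = -φ / (1 - α)) (hθ₂ : θ₂ = (π - φ) / (1 - α)) :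
    ∀ r : ℝ, 0 ≤ r → (Fray α φ θ₁ r).im ≤ 0 ∧ (Fray α φ θ₂ r).im ≤ 0 := by
  intro r hr
  obtain ⟨hρ0, hρ1⟩ := hρ
  have hπ := Real.pi_pos
  have h1α : (0:ℝ) < 1 - α := by linarith
  have hφ0 : 0 ≤ φ := by rw [hφ]; positivity
  have hφle : φ ≤ α * π := by rw [hφ]; nlinarith [mul_nonneg (mul_nonneg hα.le hπ.le) (sub_nonneg.mpr hρ1)]
  have hrp : (0:ℝ) ≤ r ^ (1 - α) := Real.rpow_nonneg hr _
  constructor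
  · have hA : φ + (1 - α) * θ₁ = 0 := by rw [hθ₁]; field_simp; ring
    have hsin : Real.sin θ₁ ≤ 0 := by
      have hθ : θ₁ = -(φ / (1 - α)) := by rw [hθ₁]; ring
      rw [hθ, Real.sin_neg, neg_nonpos]
      apply Real.sin_nonneg_of_nonneg_of_le_pi
      · positivity
      · rw [div_le_iff₀ h1α]; nlinarith
    rw [fray_im, hA, Real.sin_zero, mul_zero, add_zero]
    exact mul_nonpos_of_nonneg_of_nonpos hr hsin
  · have hA : φ + (1 - α) * θ₂ = π := by rw [hθ₂]; field_simp; ring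
    have hsin : Real.sin θ₂ ≤ 0 := by
      have hθ : θ₂ = (α * π - φ) / (1 - α) + π := by rw [hθ₂]; field_simp; ring
      rw [hθ, Real.sin_add_pi, neg_nonpos]
      apply Real.sin_nonneg_of_nonneg_of_le_pi
      · apply div_nonneg (by linarith) h1α.le
      · rw [div_le_iff₀ h1α]; nlinarith
    rw [fray_im, hA, Real.sin_pi, mul_zero, add_zero]
    exact mul_nonpos_of_nonneg_of_nonpos hr hsin
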